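/- Fix integers k ≥ 1 and n ≥ 3 and signs ε : Fin k → ℤ with ε i ∈ {1, −1} for all i. In the polynomial ring ℤ[v₁, …, v_k], let I be the ideal generated by the elements vᵢvⱼ for i ≠ j together with εᵢvᵢⁿ − εⱼvⱼⁿ for i ≠ j. Then the images of v₁², …, v_k² in the quotient ring ℤ[v₁, …, v_k]/I are linearly independent over ℤ; that is, if c : Fin k → ℤ and Σⱼ cⱼ vⱼ² ∈ I, then cⱼ = 0 for all j. -/
import Mathlib


open MvPolynomial

/-- In `ℤ[v₁,…,v_k]` with `I` generated by `vᵢvⱼ` (`i ≠ j`) and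
`εᵢvᵢⁿ − εⱼvⱼⁿ` (`i ≠ j`), `n ≥ 3`, the images of `v₁²,…,v_k²` in the quotient are
linearly independent over ℤ. -/
theorem stmt2 (k n : ℕ) (hk : 1 ≤ k) (hn : 3 ≤ n)
    (ε : Fin k → ℤ) (hε : ∀ i, ε i = 1 ∨ ε i = -1)
    (I : Ideal (MvPolynomial (Fin k) ℤ))
    (hI : I = Ideal.span
      ({p | ∃ i j : Fin k, i ≠ j ∧ p = X i * X j} ∪
       {p | ∃ i j : Fin k, i ≠ j ∧ p = C (ε i) * X i ^ n - C (ε j) * X j ^ n}))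
    (c : Fin k → ℤ) (hc : (∑ j, C (c j) * X j ^ 2) ∈ I) :
    ∀ j, c j = 0 := by
  intro j
  have hn0 : n ≠ 0 := by omega
  set f : Fin k → Polynomial ℤ := fun i => if i = j then Polynomial.X else 0 with hf
  have hmem : (aeval f) (∑ i, C (c i) * X i ^ 2) ∈ I.map (aeval f) :=
    Ideal.mem_map_of_mem _ hc
  have hterm : ∀ (a : Polynomial ℤ) (i : Fin k),
      a * (f i) ^ n ∈ Ideal.span {(Polynomial.X : Polynomial ℤ) ^ n} := by
    intro a i
    by_cases hij : i = j
    · simp only [hf, hij, if_pos rfl]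
      exact Ideal.mul_mem_left _ _ (Ideal.subset_span rfl)
    · simp [hf, hij, zero_pow hn0]
  have hsub : I.map (aeval f) ≤ Ideal.span {(Polynomial.X : Polynomial ℤ) ^ n} := by
    rw [hI, Ideal.map_span, Ideal.span_le]
    rintro p ⟨q, hq, rfl⟩
    rcases hq with ⟨i, i', hne, rfl⟩ | ⟨i, i', hne, rfl⟩
    · have : f i * f i' = 0 := by
        by_cases hij : i = j
        · have : i' ≠ j := fun h => hne (hij.trans h.symm)
          simp [hf, this]
        · simp [hf, hij]
      simp only [map_mul, aeval_X, this]
      exact Ideal.zero_mem _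
    · simp only [map_sub, map_mul, map_pow, aeval_X]
      exact Ideal.sub_mem _ (hterm _ _) (hterm _ _)
  have h2 : (Polynomial.C (c j) * Polynomial.X ^ 2 : Polynomial ℤ) ∈
      Ideal.span {(Polynomial.X : Polynomial ℤ) ^ n} := by
    have heval : (aeval f) (∑ i, C (c i) * X i ^ 2)
        = Polynomial.C (c j) * Polynomial.X ^ 2 := by
      rw [map_sum, Finset.sum_eq_single j]
      · simp [hf, Polynomial.C_eq_intCast]
      · intro b _ hb
        simp [hf, hb]
      · simp
    exact heval ▸ hsub hmem
  rw [Ideal.mem_span_singleton] at h2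
  obtain ⟨q, hq⟩ := h2
  rw [mul_comm (Polynomial.X ^ n) q] at hq
  have hco := congrArg (fun p => Polynomial.coeff p 2) hq
  simp only [Polynomial.coeff_C_mul, Polynomial.coeff_X_pow,
    Polynomial.coeff_mul_X_pow'] at hco
  rw [if_pos le_rfl, if_neg (by omega : ¬ n ≤ 2)] at hco
  simpa using hco
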